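/- arXiv:1702.08260 — 3 statements merged into one kernel-verified Lean document; each statement's English description precedes it below -/
import Mathlib

section
/- (Petersen's characterization) A topological dynamical system (X, f) on a compact metric space without isolated points is topologically weakly mixing if and only if for every pair of nonempty open sets U, V ⊆ X there exists n ∈ ℕ such that f^n(U) ∩ U ≠ ∅ and f^n(U) ∩ V ≠ ∅. -/
/-- Petersen's characterization: a topological dynamical system on a compact metric
space without isolated points is topologically weakly mixing iff for every pair of
nonempty open sets `U, V` there is `n` with `f^n U ∩ U ≠ ∅` and `f^n U ∩ V ≠ ∅`. -/
theorem stmt2 {X : Type*} [MetricSpace X] [CompactSpace X]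
    (hiso : ∀ x : X, ¬ IsOpen ({x} : Set X)) (f : X ≃ₜ X) :
    (∀ A B C D : Set X, IsOpen A → IsOpen B → IsOpen C → IsOpen D →
        A.Nonempty → B.Nonempty → C.Nonempty → D.Nonempty →
        ∃ n : ℕ, ((⇑f)^[n] '' A ∩ C).Nonempty ∧ ((⇑f)^[n] '' B ∩ D).Nonempty) ↔
      (∀ U V : Set X, IsOpen U → IsOpen V → U.Nonempty → V.Nonempty →
        ∃ n : ℕ, ((⇑f)^[n] '' U ∩ U).Nonempty ∧ ((⇑f)^[n] '' U ∩ V).Nonempty) := by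
  have hcont : ∀ n : ℕ, Continuous ((⇑f)^[n]) := fun n => f.continuous.iterate n
  have memiff : ∀ (n : ℕ) (U V : Set X),
      ((⇑f)^[n] '' U ∩ V).Nonempty ↔ ∃ x ∈ U, (⇑f)^[n] x ∈ V := by
    intro n U V
    constructor
    · rintro ⟨y, ⟨x, hx, rfl⟩, hy⟩; exact ⟨x, hx, hy⟩
    · rintro ⟨x, hx, hv⟩; exact ⟨_, ⟨x, hx, rfl⟩, hv⟩
  have comm : ∀ (a n : ℕ) (x : X), (⇑f)^[n] ((⇑f)^[a] x) = (⇑f)^[a] ((⇑f)^[n] x) := by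
    intro a n x
    rw [← Function.iterate_add_apply, Nat.add_comm, Function.iterate_add_apply]
  have preNe : ∀ (a : ℕ) (W : Set X), W.Nonempty → ((⇑f)^[a] ⁻¹' W).Nonempty := by
    rintro a W ⟨w, hw⟩
    refine ⟨(⇑f.symm)^[a] w, ?_⟩
    have hli : Function.LeftInverse ⇑f ⇑f.symm := f.apply_symm_apply
    simp only [Set.mem_preimage]
    rw [(hli.iterate a) w]
    exact hw
  constructor
  · intro h U V hU hV hUne hVne
    exact h U U U V hU hU hU hV hUne hUne hUne hVne
  · intro P A B C D hA hB hC hD hAne hBne hCne hDne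
    have P' : ∀ U V : Set X, IsOpen U → IsOpen V → U.Nonempty → V.Nonempty →
        ∃ n : ℕ, (∃ x ∈ U, (⇑f)^[n] x ∈ U) ∧ ∃ x ∈ U, (⇑f)^[n] x ∈ V := by
      intro U V hU hV hUne hVne
      obtain ⟨n, h1, h2⟩ := P U V hU hV hUne hVne
      exact ⟨n, (memiff n U U).1 h1, (memiff n U V).1 h2⟩
    -- topological transitivity
    have T : ∀ U V : Set X, IsOpen U → IsOpen V → U.Nonempty → V.Nonempty →
        ∃ n : ℕ, ∃ x ∈ U, (⇑f)^[n] x ∈ V := by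
      intro U V hU hV hUne hVne
      obtain ⟨n, _, h2⟩ := P' U V hU hV hUne hVne
      exact ⟨n, h2⟩
    -- Claim B : there is a common time returning U to U and sending V to W
    have ClaimB : ∀ U V W : Set X, IsOpen U → IsOpen V → IsOpen W →
        U.Nonempty → V.Nonempty → W.Nonempty →
        ∃ n : ℕ, (∃ x ∈ U, (⇑f)^[n] x ∈ U) ∧ ∃ y ∈ V, (⇑f)^[n] y ∈ W := by
      intro U V W hU hV hW hUne hVne hWne
      obtain ⟨a, x0, hx0U, hx0V⟩ := T U V hU hV hUne hVne
      set U' : Set X := U ∩ (⇑f)^[a] ⁻¹' V with hU'def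
      have hU'open : IsOpen U' := hU.inter (hV.preimage (hcont a))
      have hU'ne : U'.Nonempty := ⟨x0, hx0U, hx0V⟩
      set Z : Set X := (⇑f)^[a] ⁻¹' W with hZdef
      have hZopen : IsOpen Z := hW.preimage (hcont a)
      have hZne : Z.Nonempty := preNe a W hWne
      obtain ⟨n, ⟨x, hx, hxn⟩, ⟨y, hy, hyn⟩⟩ := P' U' Z hU'open hZopen hU'ne hZne
      refine ⟨n, ⟨x, hx.1, hxn.1⟩, ⟨(⇑f)^[a] y, hy.2, ?_⟩⟩
      rw [comm a n y]
      exact hyn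
    -- Claim A : there is a common time sending U to V and U to W
    have ClaimA : ∀ U V W : Set X, IsOpen U → IsOpen V → IsOpen W →
        U.Nonempty → V.Nonempty → W.Nonempty →
        ∃ n : ℕ, (∃ x ∈ U, (⇑f)^[n] x ∈ V) ∧ ∃ y ∈ U, (⇑f)^[n] y ∈ W := by
      intro U V W hU hV hW hUne hVne hWne
      obtain ⟨k, ⟨x1, hx1U, hx1U'⟩, ⟨y1, hy1V, hy1W⟩⟩ :=
        ClaimB U V W hU hV hW hUne hVne hWne
      set W1 : Set X := U ∩ (⇑f)^[k] ⁻¹' U with hW1def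
      set Z1 : Set X := V ∩ (⇑f)^[k] ⁻¹' W with hZ1def
      have hW1open : IsOpen W1 := hU.inter (hU.preimage (hcont k))
      have hZ1open : IsOpen Z1 := hV.inter (hW.preimage (hcont k))
      have hW1ne : W1.Nonempty := ⟨x1, hx1U, hx1U'⟩
      have hZ1ne : Z1.Nonempty := ⟨y1, hy1V, hy1W⟩
      obtain ⟨n, x, hx, hxn⟩ := T W1 Z1 hW1open hZ1open hW1ne hZ1ne
      refine ⟨n, ⟨x, hx.1, hxn.1⟩, ⟨(⇑f)^[k] x, hx.2, ?_⟩⟩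
      rw [comm k n x]
      exact hxn.2
    -- final argument
    obtain ⟨a, x0, hx0A, hx0B⟩ := T A B hA hB hAne hBne
    set A' : Set X := A ∩ (⇑f)^[a] ⁻¹' B with hA'def
    have hA'open : IsOpen A' := hA.inter (hB.preimage (hcont a))
    have hA'ne : A'.Nonempty := ⟨x0, hx0A, hx0B⟩
    set Z : Set X := (⇑f)^[a] ⁻¹' D with hZdef
    have hZopen : IsOpen Z := hD.preimage (hcont a)
    have hZne : Z.Nonempty := preNe a D hDne
    obtain ⟨n, ⟨x, hx, hxn⟩, ⟨y, hy, hyn⟩⟩ :=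
      ClaimA A' C Z hA'open hC hZopen hA'ne hCne hZne
    refine ⟨n, (memiff n A C).2 ⟨x, hx.1, hxn⟩, (memiff n B D).2 ⟨(⇑f)^[a] y, hy.2, ?_⟩⟩
    rw [comm a n y]
    exact hyn
end

section
/- (Banks) If (X, f) is a totally transitive topological dynamical system and the set of periodic points of f is dense in X, then (X, f) is topologically weakly mixing. -/
/-- Banks' theorem: if `(X, f)` is totally transitive and periodic points are dense,
then `(X, f)` is topologically weakly mixing. -/
theorem stmt3 {X : Type*} [MetricSpace X] [CompactSpace X] (f : X ≃ₜ X)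
    (htt : ∀ n : ℕ, 1 ≤ n → ∀ U V : Set X, IsOpen U → IsOpen V →
      U.Nonempty → V.Nonempty → ∃ m : ℕ, ((⇑f)^[n * m] '' U ∩ V).Nonempty)
    (hper : Dense {x : X | ∃ m : ℕ, 1 ≤ m ∧ (⇑f)^[m] x = x}) :
    ∀ A B C D : Set X, IsOpen A → IsOpen B → IsOpen C → IsOpen D →
      A.Nonempty → B.Nonempty → C.Nonempty → D.Nonempty →
      ∃ n : ℕ, ((⇑f)^[n] '' A ∩ C).Nonempty ∧ ((⇑f)^[n] '' B ∩ D).Nonempty := by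
  intro A B C D hA hB hC hD hAne hBne hCne hDne
  -- Step 1: by transitivity (n = 1), find k with f^[k] '' A ∩ C nonempty.
  obtain ⟨k, hk⟩ := htt 1 le_rfl A C hA hC hAne hCne
  rw [one_mul] at hk
  -- A' = A ∩ f^[k]⁻¹' C is open and nonempty.
  have hcontk : Continuous ((⇑f)^[k]) := f.continuous.iterate k
  have hA' : IsOpen (A ∩ (⇑f)^[k] ⁻¹' C) := hA.inter (hC.preimage hcontk)
  have hA'ne : (A ∩ (⇑f)^[k] ⁻¹' C).Nonempty := by
    obtain ⟨c, ⟨a, haA, hac⟩, _⟩ := hk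
    exact ⟨a, haA, by simpa [hac] using ‹c ∈ C›⟩
  -- Step 2: pick a periodic point p in A'.
  obtain ⟨p, ⟨m, hm1, hpm⟩, hpA, hpC⟩ := hper.exists_mem_open hA' hA'ne
  -- Step 3: f^[k]⁻¹' D is open and nonempty.
  have hDk : IsOpen ((⇑f)^[k] ⁻¹' D) := hD.preimage hcontk
  have hDkne : ((⇑f)^[k] ⁻¹' D).Nonempty :=
    hDne.preimage ((f.surjective).iterate k)
  -- Step 4: total transitivity for f^m.
  obtain ⟨j, y, ⟨b, hbB, hby⟩, hyD⟩ := htt m hm1 B ((⇑f)^[k] ⁻¹' D) hB hDk hBne hDkne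
  refine ⟨k + m * j, ⟨(⇑f)^[k + m * j] p, ⟨p, hpA, rfl⟩, ?_⟩,
    ⟨(⇑f)^[k + m * j] b, ⟨b, hbB, rfl⟩, ?_⟩⟩
  · have hpmj : (⇑f)^[m * j] p = p :=
      (Function.IsPeriodicPt.mul_const hpm j : Function.IsPeriodicPt (⇑f) (m * j) p)
    rw [Function.iterate_add_apply, hpmj]
    exact hpC
  · rw [Function.iterate_add_apply, hby]
    exact hyD
end

section
/- If (X, f) is a topological dynamical system such that the periodic points are dense and for every nonempty open U, V and every m ≥ 1 there exists j ≥ 1 with f^{jm}(U) ∩ V ≠ ∅ (total transitivity in the open-set sense), then for any nonempty open sets A, B, C, D ⊆ X there exists n ∈ ℕ with f^n(A) ∩ C ≠ ∅ and f^n(B) ∩ D ≠ ∅. -/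
/-- Core step of Banks' theorem: if periodic points are dense and `f` is totally
transitive in the open-set sense, then the four-open-set characterization of
topological weak mixing holds. -/
theorem stmt8 {X : Type*} [MetricSpace X] [CompactSpace X] (f : X ≃ₜ X)
    (hper : Dense {x : X | ∃ m : ℕ, 1 ≤ m ∧ (⇑f)^[m] x = x})
    (htt : ∀ U V : Set X, IsOpen U → IsOpen V → U.Nonempty → V.Nonempty →
      ∀ m : ℕ, 1 ≤ m → ∃ j : ℕ, 1 ≤ j ∧ ((⇑f)^[j * m] '' U ∩ V).Nonempty) :
    ∀ A B C D : Set X, IsOpen A → IsOpen B → IsOpen C → IsOpen D →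
      A.Nonempty → B.Nonempty → C.Nonempty → D.Nonempty →
      ∃ n : ℕ, ((⇑f)^[n] '' A ∩ C).Nonempty ∧ ((⇑f)^[n] '' B ∩ D).Nonempty := by
  intro A B C D hA hB hC hD hAne hBne hCne hDne
  -- Step 1: find ℓ with f^[ℓ](A) ∩ C ≠ ∅
  obtain ⟨l, hl1, a, ⟨a0, ha0A, ha0⟩, haC⟩ := htt A C hA hC hAne hCne 1 le_rfl
  
  -- The set A ∩ f^[l]⁻¹ C is open and nonempty
  have hcont : Continuous ((⇑f)^[l]) := f.continuous.iterate l
  have hopen : IsOpen (A ∩ (⇑f)^[l] ⁻¹' C) := hA.inter (hC.preimage hcont)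
  have hne : (A ∩ (⇑f)^[l] ⁻¹' C).Nonempty := ⟨a0, ha0A, by rw [mul_one] at ha0; rw [Set.mem_preimage, ha0]; exact haC⟩
  -- find a periodic point in it
  obtain ⟨x, ⟨m, hm1, hxm⟩, hx⟩ := hper.exists_mem_open hopen hne
  -- Step 2: find j with f^[j*m](B) ∩ f^[l]⁻¹ D ≠ ∅
  have hDpre : IsOpen ((⇑f)^[l] ⁻¹' D) := hD.preimage hcont
  have hDprene : ((⇑f)^[l] ⁻¹' D).Nonempty := by
    obtain ⟨d, hd⟩ := hDne
    exact ⟨(f.symm : X → X)^[l] d, by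
      have : (⇑f)^[l] ((⇑f.symm)^[l] d) = d :=
        (Function.LeftInverse.iterate f.apply_symm_apply l) d
      simpa [this] using hd⟩
  obtain ⟨j, hj1, y, ⟨y0, hy0B, hy0⟩, hyD⟩ :=
    htt B ((⇑f)^[l] ⁻¹' D) hB hDpre hBne hDprene m hm1
  refine ⟨j * m + l, ⟨(⇑f)^[l] x, ⟨x, hx.1, ?_⟩, hx.2⟩, ⟨(⇑f)^[l] y, ⟨y0, hy0B, ?_⟩, hyD⟩⟩
  · have hper_jm : (⇑f)^[j * m] x = x := by
      rw [mul_comm, Function.iterate_mul]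
      exact Function.iterate_fixed hxm j
    rw [Nat.add_comm, Function.iterate_add_apply, hper_jm]
  · rw [Nat.add_comm, Function.iterate_add_apply, hy0]
end
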